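/- The set L(ω) of bounded real sequences with exactly countably infinitely many accumulation points is densely lineable in ℓ∞: there exists a dense linear subspace V of ℓ∞ such that every non-zero element of V has exactly countably infinitely many accumulation points. -/

import Mathlib

open Filter Topology Set

/-- The set of accumulation points of a real sequence. -/
def AccPts (x : ℕ → ℝ) : Set ℝ := {η | ∀ ε > 0, {n : ℕ | |x n - η| < ε}.Infinite}

/-- The Banach space `ℓ∞` of bounded real sequences. -/
noncomputable abbrev linf : Type := lp (fun _ : ℕ => ℝ) ⊤

/- ### Auxiliary constructions -/

/-- The weight `2^{-(j+1)}` where `j` is the middle component of the coded triple `m`. -/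
noncomputable def wgt (m : ℕ) : ℝ := (2:ℝ)⁻¹ ^ (m.unpair.2.unpair.1 + 1)

lemma wgt_pos (m : ℕ) : 0 < wgt m := by unfold wgt; positivity

lemma wgt_le (m : ℕ) : wgt m ≤ 2⁻¹ := by
  have : (2:ℝ)⁻¹ ^ (m.unpair.2.unpair.1 + 1) ≤ (2:ℝ)⁻¹ ^ 1 :=
    pow_le_pow_of_le_one (by norm_num) (by norm_num) (by omega)
  simpa [wgt] using this

/-- The perturbation operator: `phi f (m+1) = 2^{-(j+1)} f i` where `m` codes `(i,j,k)`. -/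
noncomputable def phi (f : ℕ → ℝ) : ℕ → ℝ
  | 0 => 0
  | (m+1) => wgt m * f m.unpair.1

lemma phi_add (f g : ℕ → ℝ) (n : ℕ) :
    phi (fun i => f i + g i) n = phi f n + phi g n := by
  cases n with
  | zero => simp [phi]
  | succ m => simp [phi]; ring

lemma phi_smul (c : ℝ) (f : ℕ → ℝ) (n : ℕ) :
    phi (fun i => c * f i) n = c * phi f n := by
  cases n with
  | zero => simp [phi]
  | succ m => simp [phi]; ring

lemma bounded_of_finiteRange {f : ℕ → ℝ} (h : (Set.range f).Finite) :
    ∃ C, 0 ≤ C ∧ ∀ n, |f n| ≤ C := by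
  obtain ⟨C, hC⟩ := (h.image abs).bddAbove
  refine ⟨C, le_trans (abs_nonneg (f 0)) ?_, fun n => ?_⟩
  · exact hC (Set.mem_image_of_mem _ (Set.mem_range_self 0))
  · exact hC (Set.mem_image_of_mem _ (Set.mem_range_self n))

lemma memℓp_of_bound {f : ℕ → ℝ} (C : ℝ) (h : ∀ n, |f n| ≤ C) :
    Memℓp f (⊤ : ENNReal) := by
  refine memℓp_infty ⟨C, ?_⟩
  rintro _ ⟨n, rfl⟩
  simpa [Real.norm_eq_abs] using h n

/-- The dense subspace: graph of `phi` over finite-range sequences. -/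
noncomputable def Vsub : Submodule ℝ linf where
  carrier := {x : linf | ∃ f : ℕ → ℝ, (Set.range f).Finite ∧ ∀ n, x n = f n + phi f n}
  zero_mem' := by
    refine ⟨fun _ => 0, Set.Finite.subset (Set.finite_singleton 0) ?_, fun n => ?_⟩
    · rintro _ ⟨k, rfl⟩; simp
    · have h0 : (0 : linf) n = 0 := by rw [lp.coeFn_zero]; rfl
      cases n with
      | zero => simp [phi, h0]
      | succ m => simp [phi, h0]
  add_mem' := by
    rintro x y ⟨f, hf, hxf⟩ ⟨g, hg, hyg⟩
    refine ⟨fun i => f i + g i, ?_, fun n => ?_⟩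
    · refine Set.Finite.subset (hf.image2 (· + ·) hg) ?_
      rintro _ ⟨n, rfl⟩
      exact Set.mem_image2_of_mem (Set.mem_range_self n) (Set.mem_range_self n)
    · have : (x + y) n = x n + y n := by rw [lp.coeFn_add]; rfl
      rw [this, hxf n, hyg n, phi_add]; ring
  smul_mem' := by
    rintro c x ⟨f, hf, hxf⟩
    refine ⟨fun i => c * f i, ?_, fun n => ?_⟩
    · refine Set.Finite.subset (hf.image (fun t => c * t)) ?_
      rintro _ ⟨n, rfl⟩
      exact Set.mem_image_of_mem _ (Set.mem_range_self n)
    · have : (c • x) n = c * x n := by rw [lp.coeFn_smul]; rfl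
      rw [this, hxf n, phi_smul]; ring

/- ### Density : discretized approximate solutions of `(I + phi) f ≈ z` -/

/-- Rounding to a multiple of `ε`. -/
noncomputable def rnd (ε t : ℝ) : ℝ := ε * ⌊t / ε⌋

lemma rnd_close {ε : ℝ} (hε : 0 < ε) (t : ℝ) : |rnd ε t - t| ≤ ε := by
  have h1 : ε * (⌊t / ε⌋ : ℝ) ≤ t := by
    have := mul_le_mul_of_nonneg_left (Int.floor_le (t / ε)) hε.le
    rwa [mul_div_cancel₀ _ hε.ne'] at this
  have h2 : t - ε ≤ ε * (⌊t / ε⌋ : ℝ) := by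
    have := mul_le_mul_of_nonneg_left (Int.sub_one_lt_floor (t / ε)).le hε.le
    rw [mul_sub, mul_one, mul_div_cancel₀ _ hε.ne'] at this
    linarith
  rw [abs_le, rnd]
  constructor <;> linarith

lemma rnd_abs {ε : ℝ} (hε : 0 < ε) (t : ℝ) : |rnd ε t| ≤ |t| + ε := by
  have h := rnd_close hε t
  calc |rnd ε t| = |(rnd ε t - t) + t| := by ring_nf
    _ ≤ |rnd ε t - t| + |t| := abs_add_le _ _
    _ ≤ |t| + ε := by linarith

/-- Recursive construction of a finite-range `f` with `f + phi f` close to `z`. -/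
noncomputable def approx (z : ℕ → ℝ) (ε : ℝ) : ℕ → ℝ
  | 0 => rnd ε (z 0)
  | (m+1) => rnd ε (z (m+1) - wgt m * approx z ε m.unpair.1)
  decreasing_by exact Nat.lt_succ_of_le (Nat.unpair_left_le m)

lemma approx_bound {z : ℕ → ℝ} {ε C : ℝ} (hε : 0 < ε) (hC : 0 ≤ C)
    (hz : ∀ n, |z n| ≤ C) : ∀ n, |approx z ε n| ≤ 2 * (C + ε) := by
  intro n
  induction n using Nat.strong_induction_on with
  | _ n ih =>
    match n with
    | 0 =>
      have := rnd_abs hε (z 0)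
      have := hz 0
      simp only [approx]
      linarith
    | (m+1) =>
      have hi := ih m.unpair.1 (Nat.lt_succ_of_le (Nat.unpair_left_le m))
      have h1 := rnd_abs hε (z (m+1) - wgt m * approx z ε m.unpair.1)
      have h2 : |z (m+1) - wgt m * approx z ε m.unpair.1| ≤
          |z (m+1)| + wgt m * |approx z ε m.unpair.1| := by
        rw [sub_eq_add_neg]
        refine (abs_add_le _ _).trans ?_
        rw [abs_neg, abs_mul, abs_of_pos (wgt_pos m)]
      have h3 : wgt m * |approx z ε m.unpair.1| ≤ 2⁻¹ * (2 * (C + ε)) :=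
        mul_le_mul (wgt_le m) hi (abs_nonneg _) (by norm_num)
      have h4 := hz (m+1)
      simp only [approx]
      linarith

lemma approx_discrete (z : ℕ → ℝ) {ε : ℝ} (n : ℕ) :
    ∃ k : ℤ, approx z ε n = ε * k := by
  cases n with
  | zero => exact ⟨⌊z 0 / ε⌋, by simp [approx, rnd]⟩
  | succ m =>
    exact ⟨⌊(z (m+1) - wgt m * approx z ε m.unpair.1) / ε⌋, by simp only [approx, rnd]⟩

lemma approx_finiteRange {z : ℕ → ℝ} {ε C : ℝ} (hε : 0 < ε) (hC : 0 ≤ C)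
    (hz : ∀ n, |z n| ≤ C) : (Set.range (approx z ε)).Finite := by
  set B := 2 * (C + ε) with hB
  have hb := approx_bound hε hC hz
  have hsub : Set.range (approx z ε) ⊆
      (fun k : ℤ => ε * k) '' (Set.Icc (-⌈B / ε⌉) ⌈B / ε⌉) := by
    rintro _ ⟨n, rfl⟩
    obtain ⟨k, hk⟩ := approx_discrete z (ε := ε) n
    refine ⟨k, ⟨?_, ?_⟩, hk.symm⟩
    · have habs : ε * |(k:ℝ)| ≤ B := by
        have h := hk ▸ hb n
        rwa [abs_mul, abs_of_pos hε] at h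
      have hkle : |(k:ℝ)| ≤ B / ε := (le_div_iff₀ hε).2 (by linarith)
      have hceil := Int.le_ceil (B / ε)
      have h2 : ((-⌈B / ε⌉ : ℤ) : ℝ) ≤ (k : ℝ) := by
        push_cast
        have := neg_abs_le (k:ℝ)
        linarith
      exact_mod_cast h2
    · have habs : ε * |(k:ℝ)| ≤ B := by
        have h := hk ▸ hb n
        rwa [abs_mul, abs_of_pos hε] at h
      have hkle : |(k:ℝ)| ≤ B / ε := (le_div_iff₀ hε).2 (by linarith)
      have hceil := Int.le_ceil (B / ε)
      have h2 : (k : ℝ) ≤ ((⌈B / ε⌉ : ℤ) : ℝ) := by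
        have := le_abs_self (k:ℝ)
        linarith
      exact_mod_cast h2
  exact ((Set.finite_Icc _ _).image _).subset hsub

lemma approx_close {z : ℕ → ℝ} {ε : ℝ} (hε : 0 < ε) (n : ℕ) :
    |approx z ε n + phi (approx z ε) n - z n| ≤ ε := by
  cases n with
  | zero =>
    have := rnd_close hε (z 0)
    simpa [approx, phi] using this
  | succ m =>
    have h := rnd_close hε (z (m+1) - wgt m * approx z ε m.unpair.1)
    have : approx z ε (m+1) + phi (approx z ε) (m+1) - z (m+1) =
        rnd ε (z (m+1) - wgt m * approx z ε m.unpair.1) -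
          (z (m+1) - wgt m * approx z ε m.unpair.1) := by
      simp [approx, phi]; ring
    rw [this]
    exact h

/- ### Pigeonhole -/

lemma exists_infinite_fiber {g : ℕ → ℝ} (h : (Set.range g).Finite) :
    ∃ a, {k | g k = a}.Infinite := by
  by_contra hc
  push_neg at hc
  have hsub : (Set.univ : Set ℕ) ⊆ ⋃ a ∈ Set.range g, {k | g k = a} := fun k _ =>
    Set.mem_biUnion (Set.mem_range_self k) rfl
  exact Set.infinite_univ ((h.biUnion fun a _ => hc a).subset hsub)

theorem stmt_8 :
    ∃ V : Submodule ℝ linf, Dense (V : Set linf) ∧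
      ∀ x ∈ V, x ≠ 0 → (AccPts ⇑x).Infinite ∧ (AccPts ⇑x).Countable := by
  refine ⟨Vsub, ?_, ?_⟩
  · -- Density
    rw [Metric.dense_iff]
    intro z r hr
    have hε : 0 < r / 2 := by linarith
    set ε := r / 2 with hεdef
    set f := approx (⇑z) ε with hfdef
    have hzb : ∀ n, |z n| ≤ ‖z‖ := fun n => by
      have h := lp.norm_apply_le_norm (E := fun _ : ℕ => ℝ) ENNReal.top_ne_zero z n
      rwa [Real.norm_eq_abs] at h
    have hfr : (Set.range f).Finite := approx_finiteRange hε (norm_nonneg z) hzb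
    have hclose : ∀ n, |f n + phi f n - z n| ≤ ε := fun n => approx_close hε n
    have hvb : ∀ n, |f n + phi f n| ≤ ‖z‖ + ε := fun n => by
      calc |f n + phi f n| = |(f n + phi f n - z n) + z n| := by ring_nf
        _ ≤ |f n + phi f n - z n| + |z n| := abs_add_le _ _
        _ ≤ ε + ‖z‖ := add_le_add (hclose n) (hzb n)
        _ = ‖z‖ + ε := by ring
    set v : linf := ⟨fun n => f n + phi f n, memℓp_of_bound _ hvb⟩ with hvdef
    refine ⟨v, ?_, ⟨f, hfr, fun n => rfl⟩⟩
    rw [Metric.mem_ball, dist_eq_norm]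
    have hle : ‖v - z‖ ≤ ε := by
      apply lp.norm_le_of_forall_le hε.le
      intro n
      have : (v - z) n = (f n + phi f n) - z n := by rw [lp.coeFn_sub]; rfl
      rw [this]
      simpa [Real.norm_eq_abs] using hclose n
    calc ‖v - z‖ ≤ ε := hle
      _ < r := by rw [hεdef]; linarith
  · -- Accumulation points
    rintro x ⟨f, hfr, hxf⟩ hx0
    have hf0 : ∃ i, f i ≠ 0 := by
      by_contra h
      push_neg at h
      apply hx0
      apply lp.ext
      funext n
      have h0 : (0 : linf) n = 0 := by rw [lp.coeFn_zero]; rfl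
      rw [hxf n, h n, h0]
      cases n with
      | zero => simp [phi]
      | succ m => simp [phi, h]
    obtain ⟨i₀, hi₀⟩ := hf0
    set a := f i₀ with hadef
    set s : ℕ → ℕ → ℕ := fun j k => Nat.pair i₀ (Nat.pair j k) + 1 with hsdef
    have key : ∀ j k : ℕ, x (s j k) = f (s j k) + (2:ℝ)⁻¹ ^ (j+1) * a := by
      intro j k
      rw [hxf]
      simp [hsdef, phi, wgt, Nat.unpair_pair, hadef]
    have H : ∀ j, ∃ b, {k | f (s j k) = b}.Infinite := by
      intro j
      apply exists_infinite_fiber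
      apply hfr.subset
      rintro _ ⟨k, rfl⟩
      exact Set.mem_range_self _
    choose b hb using H
    have hbr : (Set.range b).Finite := by
      apply hfr.subset
      rintro _ ⟨j, rfl⟩
      obtain ⟨k, hk⟩ := (hb j).nonempty
      exact ⟨s j k, hk⟩
    obtain ⟨c, hc⟩ := exists_infinite_fiber hbr
    have hsinj : ∀ j, Function.Injective (s j) := by
      intro j k k' h
      simp only [hsdef] at h
      have := Nat.pair_eq_pair.mp (Nat.add_right_cancel h)
      exact (Nat.pair_eq_pair.mp this.2).2
    have hacc : ∀ j ∈ {j | b j = c}, (c + (2:ℝ)⁻¹ ^ (j+1) * a) ∈ AccPts ⇑x := by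
      intro j hj ε hε
      refine ((hb j).image ((hsinj j).injOn)).mono ?_
      rintro _ ⟨k, hk, rfl⟩
      simp only [Set.mem_setOf_eq] at hk ⊢
      rw [key j k, hk, hj]
      simpa using hε
    have hmapinj : Set.InjOn (fun j => c + (2:ℝ)⁻¹ ^ (j+1) * a) {j | b j = c} := by
      intro j _ j' _ h
      have h' := add_left_cancel h
      have h2 : (2:ℝ)⁻¹ ^ (j+1) = (2:ℝ)⁻¹ ^ (j'+1) := mul_right_cancel₀ hi₀ h'
      have := (pow_right_strictAnti₀ (a := (2:ℝ)⁻¹) (by norm_num) (by norm_num)).injective h2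
      omega
    constructor
    · refine (hc.image hmapinj).mono ?_
      rintro _ ⟨j, hj, rfl⟩
      exact hacc j hj
    · -- Countability
      set T : Set ℝ := insert 0 (Set.range fun j : ℕ => (2:ℝ)⁻¹ ^ (j+1)) with hTdef
      have hTcpt : IsCompact T := by
        have h0 : Tendsto (fun j : ℕ => (2:ℝ)⁻¹ ^ j) atTop (𝓝 0) :=
          tendsto_pow_atTop_nhds_zero_of_lt_one (by norm_num) (by norm_num)
        have h1 : Tendsto (fun j : ℕ => (2:ℝ)⁻¹ ^ (j+1)) atTop (𝓝 0) :=
          h0.comp (tendsto_add_atTop_nat 1)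
        exact h1.isCompact_insert_range
      set R' : Set ℝ := insert 0 (Set.range f) with hRdef
      have hR' : R'.Finite := hfr.insert 0
      set U : Set ℝ := ⋃ p ∈ R' ×ˢ R', (fun t => p.1 + p.2 * t) '' T with hUdef
      have hUclosed : IsClosed U := by
        apply Set.Finite.isClosed_biUnion (hR'.prod hR')
        intro p _
        exact (hTcpt.image (by continuity)).isClosed
      have hUcount : U.Countable := by
        apply Set.Countable.biUnion (hR'.prod hR').countable
        intro p _
        exact ((Set.countable_range _).insert 0).image _
      have hrange : Set.range ⇑x ⊆ U := by
        rintro _ ⟨n, rfl⟩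
        rw [hxf n]
        cases n with
        | zero =>
          refine Set.mem_biUnion (x := ((f 0 : ℝ), (0:ℝ))) ?_ ?_
          · exact Set.mem_prod.mpr ⟨Set.mem_insert_of_mem _ (Set.mem_range_self 0),
              Set.mem_insert _ _⟩
          · exact ⟨0, Set.mem_insert _ _, by simp [phi]⟩
        | succ m =>
          refine Set.mem_biUnion (x := ((f (m+1) : ℝ), f m.unpair.1)) ?_ ?_
          · exact Set.mem_prod.mpr ⟨Set.mem_insert_of_mem _ (Set.mem_range_self _),
              Set.mem_insert_of_mem _ (Set.mem_range_self _)⟩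
          · refine ⟨(2:ℝ)⁻¹ ^ (m.unpair.2.unpair.1 + 1),
              Set.mem_insert_of_mem _ (Set.mem_range_self _), ?_⟩
            simp [phi, wgt]; ring
      have hsub : AccPts ⇑x ⊆ U := by
        intro η hη
        have hcl : η ∈ closure (Set.range ⇑x) := by
          rw [Metric.mem_closure_iff]
          intro δ hδ
          obtain ⟨n, hn⟩ := (hη δ hδ).nonempty
          exact ⟨x n, Set.mem_range_self n, by
            rw [Real.dist_eq, abs_sub_comm]; exact hn⟩
        exact closure_minimal hrange hUclosed hcl
      exact hUcount.mono hsub
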